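/- Let 0 ≤ r ≤ m and 𝐩 = (p_1,…,p_m) with 1 ≤ p_i < ∞ for 1 ≤ i ≤ r and p_{r+1} = … = p_m = ∞. Let f : Λ^{𝐤} → ℝ be separately convex and satisfy |f(ξ)| ≤ α(1 + Σ_{i=1}^r |ξ_i|^{p_i} + Σ_{i=r+1}^m η_i(|ξ_i|)) for all ξ, where α > 0 and the η_i are nonnegative, continuous, increasing functions. Let C > 0, let Q ⊂ ∏_{i=r+1}^m Λ^{k_i}(ℝⁿ) be the cube consisting of points all of whose components lie in [−C,C], and set K := Λ^{k_1} × … × Λ^{k_r} × Q. Then there exist constants β_i = β_i(K) > 0, i = 1,…,m, such that for all ξ, ζ ∈ K: |f(ξ) − f(ζ)| ≤ Σ_{i=1}^r β_i (1 + Σ_{j=1}^r (|ξ_j|^{p_j/p_i'} + |ζ_j|^{p_j/p_i'})) |ξ_i − ζ_i| + Σ_{i=r+1}^m β_i (1 + Σ_{j=1}^r (|ξ_j|^{p_j} + |ζ_j|^{p_j})) |ξ_i − ζ_i|, where p_i' is the Hölder conjugate of p_i. -/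

import Mathlib

open MeasureTheory Filter Topology
open scoped ENNReal

noncomputable section

/-- Euclidean `n`-space `ℝⁿ`. -/
abbrev Rn (n : ℕ) := EuclideanSpace ℝ (Fin n)

/-- Index type for the coordinates of `Λᵏ(ℝⁿ)` : `k`-element subsets of `{0,…,n-1}`. -/
abbrev IdxSet (n k : ℕ) := {s : Finset (Fin n) // s.card = k}

/-- The space `Λᵏ(ℝⁿ)` of alternating `k`-linear maps on `ℝⁿ`, in coordinates. -/
abbrev Lam (n k : ℕ) := IdxSet n k → ℝ

/-- The euclidean scalar product `⟨·;·⟩` on `Λᵏ(ℝⁿ)`. -/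
def dotL {n k : ℕ} (x y : Lam n k) : ℝ := ∑ S, x S * y S

/-- The euclidean norm `|·|` on `Λᵏ(ℝⁿ)`. -/
def nL {n k : ℕ} (x : Lam n k) : ℝ := Real.sqrt (∑ S, x S ^ 2)

/-- The sign of the shuffle putting `A ∪ B` in increasing order, `A` before `B`. -/
def interSign {n : ℕ} (A B : Finset (Fin n)) : ℝ :=
  (-1 : ℝ) ^ ((A ×ˢ B).filter fun p => p.2 < p.1).card

/-- The wedge (exterior) product `Λᵏ × Λˡ → Λ^{k+l}`. -/
def wedge {n k l : ℕ} (ξ : Lam n k) (η : Lam n l) : Lam n (k + l) := fun S =>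
  ∑ A ∈ S.1.powerset.attach,
    if hA : A.1.card = k then
      interSign A.1 (S.1 \ A.1) * ξ ⟨A.1, hA⟩ *
        η ⟨S.1 \ A.1, by
          rw [Finset.card_sdiff_of_subset (Finset.mem_powerset.mp A.2), S.2, hA]; omega⟩
    else 0

/-- Transport along an equality of degrees. -/
def lamCast {n k l : ℕ} (h : k = l) (ξ : Lam n k) : Lam n l := fun S => ξ ⟨S.1, by rw [S.2, h]⟩

/-- The wedge power `ξ^a = ξ ∧ ⋯ ∧ ξ` (`a` times). -/
def wpow {n k : ℕ} (ξ : Lam n k) : (a : ℕ) → Lam n (k * a)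
  | 0 => fun _ => 1
  | a + 1 => wedge (wpow ξ a) ξ

/-- The wedge product of a finite family of forms. -/
def wprod {n : ℕ} : {m : ℕ} → (d : Fin m → ℕ) → ((i : Fin m) → Lam n (d i)) → Lam n (∑ i, d i)
  | 0, _, _ => lamCast (by simp) ((fun _ => (1 : ℝ)) : Lam n 0)
  | _ + 1, d, ξ =>
      lamCast (Fin.sum_univ_succ d).symm
        (wedge (ξ 0) (wprod (fun i => d i.succ) fun i => ξ i.succ))

/-- `ξ^α = ξ₁^{α₁} ∧ ⋯ ∧ ξ_m^{α_m}`. -/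
def wpowProd {n m : ℕ} (k : Fin m → ℕ) (ξ : (i : Fin m) → Lam n (k i)) (α : Fin m → ℕ) :
    Lam n (∑ i, k i * α i) :=
  wprod (fun i => k i * α i) fun i => wpow (ξ i) (α i)

/-- sign of inserting `i` into `S`. -/
def epsSign {n : ℕ} (i : Fin n) (S : Finset (Fin n)) : ℝ :=
  (-1 : ℝ) ^ (S.filter fun j => j < i).card

/-- `i`-th partial derivative of a scalar function on `ℝⁿ`. -/
def pd {n : ℕ} (i : Fin n) (ψ : Rn n → ℝ) (x : Rn n) : ℝ :=
  fderiv ℝ ψ x (EuclideanSpace.single i 1)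

/-- Test functions for distributions on `Ω`: smooth, compactly supported in `Ω`. -/
def IsTest {n : ℕ} (Ω : Set (Rn n)) (ψ : Rn n → ℝ) : Prop :=
  ContDiff ℝ (⊤ : ℕ∞) ψ ∧ HasCompactSupport ψ ∧ tsupport ψ ⊆ Ω

/-- `v` is the distributional exterior derivative of the `(j-1)`-form field `ω` on `Ω`. -/
def IsWED {n : ℕ} (Ω : Set (Rn n)) {j : ℕ} (ω : Rn n → Lam n (j - 1)) (v : Rn n → Lam n j) :
    Prop :=
  ∀ (S : IdxSet n j) (ψ : Rn n → ℝ), IsTest Ω ψ →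
    ∫ x in Ω, v x S * ψ x =
      - ∑ i ∈ S.1.attach,
          epsSign i.1 S.1 *
            ∫ x in Ω,
              ω x ⟨S.1.erase i.1, by rw [Finset.card_erase_of_mem i.2, S.2]⟩ * pd i.1 ψ x

/-- `v = dω` weakly on `Ω` together with vanishing tangential trace `ν ∧ ω = 0` on `∂Ω`:
integration by parts holds with no boundary term against all smooth test functions (not
necessarily compactly supported). -/
def IsWEDT {n : ℕ} (Ω : Set (Rn n)) {j : ℕ} (ω : Rn n → Lam n (j - 1)) (v : Rn n → Lam n j) :
    Prop :=
  ∀ (S : IdxSet n j) (ψ : Rn n → ℝ), ContDiff ℝ (⊤ : ℕ∞) ψ →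
    ∫ x in Ω, v x S * ψ x =
      - ∑ i ∈ S.1.attach,
          epsSign i.1 S.1 *
            ∫ x in Ω,
              ω x ⟨S.1.erase i.1, by rw [Finset.card_erase_of_mem i.2, S.2]⟩ * pd i.1 ψ x

/-- The exterior derivative of a `(j-1)`-form field expressed through the (weak) partial
derivatives `D` of its components. -/
def extDerivOf {n : ℕ} {j : ℕ} (D : Fin n → Rn n → Lam n (j - 1)) : Rn n → Lam n j :=
  fun x S =>
    ∑ i ∈ S.1.attach,
      epsSign i.1 S.1 * D i.1 x ⟨S.1.erase i.1, by rw [Finset.card_erase_of_mem i.2, S.2]⟩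

/-- The (classical) exterior derivative of a smooth `(j-1)`-form field. -/
def smoothExtD {n : ℕ} {j : ℕ} (φ : Rn n → Lam n (j - 1)) : Rn n → Lam n j :=
  fun x S =>
    ∑ i ∈ S.1.attach,
      epsSign i.1 S.1 *
        fderiv ℝ (fun y => φ y ⟨S.1.erase i.1, by rw [Finset.card_erase_of_mem i.2, S.2]⟩) x
          (EuclideanSpace.single i.1 1)

/-- `dω = 0` in the sense of distributions on `Ω`. -/
def WeakClosed {n : ℕ} {j : ℕ} (Ω : Set (Rn n)) (ω : Rn n → Lam n j) : Prop :=
  IsWED (j := j + 1) Ω ω fun _ => (0 : Lam n (j + 1))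

/-- `δω = 0` in the sense of distributions on `Ω`:
`∫ ⟨ω, dφ⟩ = 0` for every smooth compactly supported `(j-1)`-form field `φ`. -/
def WeakCoclosed {n : ℕ} {j : ℕ} (Ω : Set (Rn n)) (ω : Rn n → Lam n j) : Prop :=
  ∀ φ : Rn n → Lam n (j - 1), ContDiff ℝ (⊤ : ℕ∞) φ → HasCompactSupport φ → tsupport φ ⊆ Ω →
    ∫ x in Ω, dotL (ω x) (smoothExtD (j := j) φ x) = 0

/-- The conjugate Hölder exponent. -/
def conjExp (p : ℝ≥0∞) : ℝ≥0∞ :=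
  if p = ∞ then 1 else if p = 1 then ∞ else ENNReal.ofReal (p.toReal / (p.toReal - 1))

/-- Weak convergence (weak-* if `p = ∞`) of a sequence in `L^p(Ω; Λᵏ)`:
the sequence and the limit belong to `L^p` and the integrals against every element of the
conjugate Lebesgue space converge. -/
def WeakLp {n j : ℕ} (Ω : Set (Rn n)) (p : ℝ≥0∞) (F : ℕ → Rn n → Lam n j)
    (f : Rn n → Lam n j) : Prop :=
  (∀ ν, MemLp (F ν) p (volume.restrict Ω)) ∧ MemLp f p (volume.restrict Ω) ∧
    ∀ g : Rn n → Lam n j, MemLp g (conjExp p) (volume.restrict Ω) →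
      Tendsto (fun ν => ∫ x in Ω, dotL (F ν x) (g x)) atTop
        (𝓝 (∫ x in Ω, dotL (f x) (g x)))

/-- `v` is the `i`-th weak partial derivative of `u` on `Ω`. -/
def IsWeakPartial {n : ℕ} {E : Type*} [NormedAddCommGroup E] [NormedSpace ℝ E]
    (Ω : Set (Rn n)) (i : Fin n) (u v : Rn n → E) : Prop :=
  ∀ ψ : Rn n → ℝ, IsTest Ω ψ → ∫ x in Ω, ψ x • v x = - ∫ x in Ω, pd i ψ x • u x

/-- Membership in the Sobolev space `W^{1,p}(Ω; E)`, with weak partial derivatives `D`. -/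
def MemW1p {n : ℕ} {E : Type*} [NormedAddCommGroup E] [NormedSpace ℝ E] (Ω : Set (Rn n))
    (p : ℝ≥0∞) (u : Rn n → E) (D : Fin n → Rn n → E) : Prop :=
  MemLp u p (volume.restrict Ω) ∧
    ∀ i, IsWeakPartial Ω i u (D i) ∧ MemLp (D i) p (volume.restrict Ω)

/-- Membership in `W₀^{1,p}(Ω; E)` (zero boundary values): the extension of `u` by zero
belongs to `W^{1,p}(ℝⁿ; E)`. -/
def MemW1p0 {n : ℕ} {E : Type*} [NormedAddCommGroup E] [NormedSpace ℝ E] (Ω : Set (Rn n))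
    (p : ℝ≥0∞) (u : Rn n → E) (D : Fin n → Rn n → E) : Prop :=
  MemW1p Ω p u D ∧ (∀ x ∉ Ω, u x = 0) ∧
    ∀ i, (∀ x ∉ Ω, D i x = 0) ∧ IsWeakPartial Set.univ i u (D i)

/-- A bounded open set with smooth boundary, via local smooth defining functions. -/
def IsSmoothDomain {n : ℕ} (Ω : Set (Rn n)) : Prop :=
  ∀ x ∈ frontier Ω, ∃ (U : Set (Rn n)) (ρ : Rn n → ℝ), IsOpen U ∧ x ∈ U ∧
    ContDiff ℝ (⊤ : ℕ∞) ρ ∧ (∀ y ∈ U, (y ∈ Ω ↔ ρ y < 0)) ∧ ∀ y ∈ U, fderiv ℝ ρ y ≠ 0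

/-- Vectorial ext. one convexity. -/
def VOneConvex {n m : ℕ} (k : Fin m → ℕ) (f : ((i : Fin m) → Lam n (k i + 1)) → ℝ) : Prop :=
  ∀ (ξ : (i : Fin m) → Lam n (k i + 1)) (a : Lam n 1) (b : (i : Fin m) → Lam n (k i)),
    ConvexOn ℝ Set.univ fun t : ℝ =>
      f fun i => ξ i + t • lamCast (Nat.add_comm 1 (k i)) (wedge a (b i))

/-- Vectorial ext. one affinity. -/
def VOneAffine {n m : ℕ} (k : Fin m → ℕ) (f : ((i : Fin m) → Lam n (k i + 1)) → ℝ) : Prop :=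
  ∀ (ξ : (i : Fin m) → Lam n (k i + 1)) (a : Lam n 1) (b : (i : Fin m) → Lam n (k i)),
    ∃ c d : ℝ, ∀ t : ℝ,
      f (fun i => ξ i + t • lamCast (Nat.add_comm 1 (k i)) (wedge a (b i))) = c + d * t

/-- Vectorial ext. quasiconvexity. -/
def VQuasiconvex {n m : ℕ} (k : Fin m → ℕ) (f : ((i : Fin m) → Lam n (k i + 1)) → ℝ) : Prop :=
  ∀ (Ω : Set (Rn n)), IsOpen Ω → Bornology.IsBounded Ω → Ω.Nonempty →
    ∀ (ξ : (i : Fin m) → Lam n (k i + 1)) (ω : (i : Fin m) → Rn n → Lam n (k i))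
      (v : (i : Fin m) → Rn n → Lam n (k i + 1)),
      (∀ i, ∃ C, LipschitzWith C (ω i)) → (∀ i, ∀ x ∉ Ω, ω i x = 0) →
      (∀ i, IsWED (j := k i + 1) Ω (ω i) (v i)) →
      (∀ i, MemLp (v i) ∞ (volume.restrict Ω)) →
      f ξ * (volume Ω).toReal ≤ ∫ x in Ω, f fun i => ξ i + v i x

/-- Vectorial ext. quasiaffinity. -/
def VQuasiaffine {n m : ℕ} (k : Fin m → ℕ) (f : ((i : Fin m) → Lam n (k i + 1)) → ℝ) : Prop :=
  ∀ (Ω : Set (Rn n)), IsOpen Ω → Bornology.IsBounded Ω → Ω.Nonempty →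
    ∀ (ξ : (i : Fin m) → Lam n (k i + 1)) (ω : (i : Fin m) → Rn n → Lam n (k i))
      (v : (i : Fin m) → Rn n → Lam n (k i + 1)),
      (∀ i, ∃ C, LipschitzWith C (ω i)) → (∀ i, ∀ x ∉ Ω, ω i x = 0) →
      (∀ i, IsWED (j := k i + 1) Ω (ω i) (v i)) →
      (∀ i, MemLp (v i) ∞ (volume.restrict Ω)) →
      (∫ x in Ω, f fun i => ξ i + v i x) = f ξ * (volume Ω).toReal

/-- Multiindices `α` with `1 ≤ |kα| ≤ n` (degrees of the nontrivial wedge powers). -/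
abbrev MIdx (n m : ℕ) (k : Fin m → ℕ) :=
  {α : Fin m → Fin (n + 1) //
    1 ≤ ∑ i, (k i + 1) * (α i : ℕ) ∧ ∑ i, (k i + 1) * (α i : ℕ) ≤ n}

/-- Multiindices `α` with `0 ≤ |kα| ≤ n`. -/
abbrev MIdx0 (n m : ℕ) (k : Fin m → ℕ) :=
  {α : Fin m → Fin (n + 1) // ∑ i, (k i + 1) * (α i : ℕ) ≤ n}

/-- The target space of the map `T`. -/
abbrev TSpace (n m : ℕ) (k : Fin m → ℕ) :=
  (α : MIdx n m k) → Lam n (∑ i, (k i + 1) * (α.1 i : ℕ))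

/-- `T(ξ)`, the vector of all nontrivial wedge powers of `ξ`. -/
def Tvec {n m : ℕ} (k : Fin m → ℕ) (ξ : (i : Fin m) → Lam n (k i + 1)) : TSpace n m k :=
  fun α => wpowProd (fun i => k i + 1) ξ fun i => (α.1 i : ℕ)

/-- Vectorial ext. polyconvexity. -/
def VPolyconvex {n m : ℕ} (k : Fin m → ℕ) (f : ((i : Fin m) → Lam n (k i + 1)) → ℝ) : Prop :=
  ∃ F : TSpace n m k → ℝ, ConvexOn ℝ Set.univ F ∧ ∀ ξ, f ξ = F (Tvec k ξ)

/-- Vectorial ext. polyaffinity. -/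
def VPolyaffine {n m : ℕ} (k : Fin m → ℕ) (f : ((i : Fin m) → Lam n (k i + 1)) → ℝ) : Prop :=
  ∃ (c : ℝ) (L : TSpace n m k →ₗ[ℝ] ℝ), ∀ ξ, f ξ = c + L (Tvec k ξ)

/-- Separate convexity: convexity in each scalar component. -/
def SepConvex {n m : ℕ} {d : Fin m → ℕ} (f : ((i : Fin m) → Lam n (d i)) → ℝ) : Prop :=
  ∀ (ξ : (i : Fin m) → Lam n (d i)) (i : Fin m) (S : IdxSet n (d i)),
    ConvexOn ℝ Set.univ fun t : ℝ => f (Function.update ξ i (Function.update (ξ i) S t))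

/-- Equiintegrability of a family of functions over `Ω`. -/
def EquiInt {n : ℕ} (Ω : Set (Rn n)) (F : ℕ → Rn n → ℝ) : Prop :=
  ∀ ε > (0 : ℝ), ∃ δ > (0 : ℝ), ∀ A : Set (Rn n), MeasurableSet A →
    volume A ≤ ENNReal.ofReal δ → ∀ s, ∫ x in A ∩ Ω, |F s x| ≤ ε

/-- Admissible lower growth function for exponent `p` (growth condition `(C_p)`). -/
def LowerCtrl {n j : ℕ} (p : ℝ≥0∞) (G : Lam n j → ℝ) : Prop :=
  (p = 1 ∧ ∃ a : ℝ, 0 ≤ a ∧ ∀ ξ, G ξ = a * nL ξ) ∨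
  (1 < p ∧ p ≠ ∞ ∧ ∃ a q : ℝ, 0 ≤ a ∧ 1 ≤ q ∧ q < p.toReal ∧ ∀ ξ, G ξ = a * nL ξ ^ q) ∨
  (p = ∞ ∧ ∃ η : ℝ → ℝ, (∀ t, 0 ≤ η t) ∧ Continuous η ∧ Monotone η ∧ ∀ ξ, G ξ = η (nL ξ))

/-- Admissible upper growth function for exponent `p` (growth condition `(C_p)`). -/
def UpperCtrl {n j : ℕ} (p : ℝ≥0∞) (G : Lam n j → ℝ) : Prop :=
  (p = 1 ∧ ∃ a : ℝ, 0 ≤ a ∧ ∀ ξ, G ξ = a * nL ξ) ∨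
  (1 < p ∧ p ≠ ∞ ∧ ∃ a : ℝ, 0 ≤ a ∧ ∀ ξ, G ξ = a * nL ξ ^ p.toReal) ∨
  (p = ∞ ∧ ∃ η : ℝ → ℝ, (∀ t, 0 ≤ η t) ∧ Continuous η ∧ Monotone η ∧ ∀ ξ, G ξ = η (nL ξ))

/-- The growth condition `(C_𝐩)`. -/
def GrowthCp {n m : ℕ} (k : Fin m → ℕ) (p : Fin m → ℝ≥0∞)
    (f : ((i : Fin m) → Lam n (k i + 1)) → ℝ) : Prop :=
  ∃ (a : ℝ) (Gl Gu : (i : Fin m) → Lam n (k i + 1) → ℝ), 0 < a ∧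
    (∀ i, LowerCtrl (p i) (Gl i)) ∧ (∀ i, UpperCtrl (p i) (Gu i)) ∧
    ∀ ξ, -(a * (1 + ∑ i, Gl i (ξ i))) ≤ f ξ ∧ f ξ ≤ a * (1 + ∑ i, Gu i (ξ i))


private lemma rpow_subadd {x y s : ℝ} (hx : 0 ≤ x) (hy : 0 ≤ y) (hs0 : 0 ≤ s) (hs1 : s ≤ 1) :
    (x + y) ^ s ≤ x ^ s + y ^ s := by
  have h := NNReal.rpow_add_le_add_rpow x.toNNReal y.toNNReal hs0 hs1
  have h2 := NNReal.coe_le_coe.2 h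
  push_cast [NNReal.coe_rpow] at h2
  rwa [Real.coe_toNNReal _ hx, Real.coe_toNNReal _ hy] at h2

private lemma one_add_sum_rpow_le {J : Type*} {T : Finset J} {t : J → ℝ}
    (ht : ∀ j ∈ T, 0 ≤ t j) {s : ℝ} (hs0 : 0 ≤ s) (hs1 : s ≤ 1) :
    (1 + ∑ j ∈ T, t j) ^ s ≤ 1 + ∑ j ∈ T, t j ^ s := by
  induction T using Finset.cons_induction with
  | empty => simp [Real.one_rpow]
  | cons a T ha ih =>
    rw [Finset.sum_cons, Finset.sum_cons]
    have hta : 0 ≤ t a := ht a (Finset.mem_cons_self a T)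
    have hsum : 0 ≤ ∑ j ∈ T, t j :=
      Finset.sum_nonneg fun j hj => ht j (Finset.mem_cons_of_mem hj)
    calc (1 + (t a + ∑ j ∈ T, t j)) ^ s = (t a + (1 + ∑ j ∈ T, t j)) ^ s := by ring_nf
      _ ≤ t a ^ s + (1 + ∑ j ∈ T, t j) ^ s :=
          rpow_subadd hta (by linarith) hs0 hs1
      _ ≤ t a ^ s + (1 + ∑ j ∈ T, t j ^ s) := by
          have := ih fun j hj => ht j (Finset.mem_cons_of_mem hj)
          linarith
      _ = 1 + (t a ^ s + ∑ j ∈ T, t j ^ s) := by ring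

private lemma convex_diff_bound {g : ℝ → ℝ} (hg : ConvexOn ℝ Set.univ g)
    {h A : ℝ} (hh : 0 < h) (s t : ℝ)
    (hA : ∀ u, |u| ≤ max |s| |t| + h → |g u| ≤ A) :
    |g t - g s| ≤ 2 * A / h * |t - s| := by
  have key : ∀ s t : ℝ, s < t → (∀ u, |u| ≤ max |s| |t| + h → |g u| ≤ A) →
      |g t - g s| ≤ 2 * A / h * (t - s) := by
    intro s t hst hA
    have hbs : |g s| ≤ A := hA s (by have := le_max_left |s| |t|; linarith)
    have hbt : |g t| ≤ A := hA t (by have := le_max_right |s| |t|; linarith)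
    have hbth : |g (t + h)| ≤ A := by
      refine hA _ ?_
      calc |t + h| ≤ |t| + |h| := abs_add_le _ _
        _ ≤ max |s| |t| + h := by rw [abs_of_pos hh]; exact add_le_add_left (le_max_right _ _) _
    have hbsh : |g (s - h)| ≤ A := by
      refine hA _ ?_
      calc |s - h| ≤ |s| + |h| := abs_sub _ _
        _ ≤ max |s| |t| + h := by rw [abs_of_pos hh]; exact add_le_add_left (le_max_left _ _) _
    have up : (g t - g s) / (t - s) ≤ (g (t + h) - g t) / h := by
      have := hg.slope_mono_adjacent (Set.mem_univ s) (Set.mem_univ (t + h)) hst (by linarith)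
      simpa [slope_def_field] using this
    have lo : (g s - g (s - h)) / h ≤ (g t - g s) / (t - s) := by
      have := hg.slope_mono_adjacent (Set.mem_univ (s - h)) (Set.mem_univ t)
        (by linarith : s - h < s) hst
      simpa [slope_def_field] using this
    have hts : (0:ℝ) < t - s := by linarith
    have hbt' := abs_le.1 hbt
    have hbth' := abs_le.1 hbth
    have hbs' := abs_le.1 hbs
    have hbsh' := abs_le.1 hbsh
    have upper : g t - g s ≤ 2 * A / h * (t - s) := by
      have h3 : (g t - g s) / (t - s) ≤ 2 * A / h :=
        up.trans (by gcongr; linarith)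
      have := (div_le_iff₀ hts).1 h3
      linarith
    have lower : -(2 * A / h * (t - s)) ≤ g t - g s := by
      have h3 : -(2 * A) / h ≤ (g t - g s) / (t - s) :=
        le_trans (by gcongr ?x / h; linarith) lo
      have := (le_div_iff₀ hts).1 h3
      have hneg : -(2 * A) / h * (t - s) = -(2 * A / h * (t - s)) := by ring
      linarith [hneg ▸ this]
    rw [abs_le]; exact ⟨lower, upper⟩
  rcases lt_trichotomy s t with hst | rfl | hst
  · rw [abs_of_pos (by linarith : (0:ℝ) < t - s)] at *
    exact key s t hst hA
  · simp
  · rw [abs_sub_comm (g t), abs_sub_comm t]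
    rw [abs_of_pos (by linarith : (0:ℝ) < s - t)]
    exact key t s hst (by intro u hu; exact hA u (by rwa [max_comm] at hu))

private lemma rpow_add_le_two {x y q : ℝ} (hx : 0 ≤ x) (hy : 0 ≤ y) (hq : 0 ≤ q) :
    (x + y) ^ q ≤ 2 ^ q * (x ^ q + y ^ q) := by
  have h2 : (0:ℝ) ≤ 2 ^ q := Real.rpow_nonneg (by norm_num) q
  rcases le_total x y with hxy | hxy
  · calc (x + y) ^ q ≤ (2 * y) ^ q := Real.rpow_le_rpow (by linarith) (by linarith) hq
      _ = 2 ^ q * y ^ q := Real.mul_rpow (by norm_num) hy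
      _ ≤ 2 ^ q * (x ^ q + y ^ q) := by
          have := Real.rpow_nonneg hx q
          nlinarith
  · calc (x + y) ^ q ≤ (2 * x) ^ q := Real.rpow_le_rpow (by linarith) (by linarith) hq
      _ = 2 ^ q * x ^ q := Real.mul_rpow (by norm_num) hx
      _ ≤ 2 ^ q * (x ^ q + y ^ q) := by
          have := Real.rpow_nonneg hy q
          nlinarith

private lemma nL_nonneg {n k : ℕ} (x : Lam n k) : 0 ≤ nL x := Real.sqrt_nonneg _

private lemma nL_le_sum_abs {n k : ℕ} (x : Lam n k) : nL x ≤ ∑ S, |x S| := by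
  have h1 : ∑ S, x S ^ 2 ≤ (∑ S, |x S|) ^ 2 := by
    rw [sq]
    calc ∑ S, x S ^ 2 = ∑ S, |x S| * |x S| := by
          refine Finset.sum_congr rfl fun S _ => ?_
          rw [sq, ← abs_mul_abs_self (x S)]
      _ ≤ ∑ S, |x S| * ∑ T, |x T| := by
          refine Finset.sum_le_sum fun S _ => ?_
          refine mul_le_mul_of_nonneg_left ?_ (abs_nonneg _)
          exact Finset.single_le_sum (fun T _ => abs_nonneg (x T)) (Finset.mem_univ S)
      _ = (∑ S, |x S|) * ∑ T, |x T| := by rw [← Finset.sum_mul]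
  calc nL x ≤ Real.sqrt ((∑ S, |x S|) ^ 2) := Real.sqrt_le_sqrt h1
    _ = ∑ S, |x S| := Real.sqrt_sq (Finset.sum_nonneg fun S _ => abs_nonneg _)

private lemma abs_le_nL {n k : ℕ} (x : Lam n k) (S : IdxSet n k) : |x S| ≤ nL x := by
  have : x S ^ 2 ≤ ∑ T, x T ^ 2 :=
    Finset.single_le_sum (fun T _ => sq_nonneg (x T)) (Finset.mem_univ S)
  calc |x S| = Real.sqrt (x S ^ 2) := (Real.sqrt_sq_eq_abs _).symm
    _ ≤ nL x := Real.sqrt_le_sqrt this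

private lemma sum_abs_le_card_nL {n k : ℕ} (x : Lam n k) :
    ∑ S, |x S| ≤ (Fintype.card (IdxSet n k) : ℝ) * nL x := by
  calc ∑ S, |x S| ≤ ∑ _S : IdxSet n k, nL x := Finset.sum_le_sum fun S _ => abs_le_nL x S
    _ = (Fintype.card (IdxSet n k) : ℝ) * nL x := by
        rw [Finset.sum_const, Finset.card_univ, nsmul_eq_mul]

private lemma nL_le_card_mul {n k : ℕ} (x : Lam n k) {c : ℝ} (hc : ∀ S, |x S| ≤ c)
    (hc0 : 0 ≤ c) : nL x ≤ (Fintype.card (IdxSet n k) : ℝ) * c := by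
  calc nL x ≤ ∑ S, |x S| := nL_le_sum_abs x
    _ ≤ ∑ _S : IdxSet n k, c := Finset.sum_le_sum fun S _ => hc S
    _ = (Fintype.card (IdxSet n k) : ℝ) * c := by
        rw [Finset.sum_const, Finset.card_univ, nsmul_eq_mul]

private lemma sep_convex_diff_bound {N : Type*} [Fintype N] [DecidableEq N]
    {g : (N → ℝ) → ℝ}
    (hconv : ∀ z S, ConvexOn ℝ Set.univ fun t => g (Function.update z S t))
    (x y : N → ℝ) {h A : ℝ} (hh : 0 < h)
    (hA : ∀ u : N → ℝ, (∀ S, |u S| ≤ max |x S| |y S| + h) → |g u| ≤ A) :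
    |g x - g y| ≤ 2 * A / h * ∑ S, |x S - y S| := by
  have hA0 : 0 ≤ A := le_trans (abs_nonneg _)
    (hA y fun S => by have := le_max_right |x S| |y S|; linarith)
  have main : ∀ T : Finset N,
      |g (T.piecewise x y) - g y| ≤ 2 * A / h * ∑ S ∈ T, |x S - y S| := by
    intro T
    induction T using Finset.induction_on with
    | empty => simp
    | @insert a T ha ih =>
      have hz : ∀ S, |T.piecewise x y S| ≤ max |x S| |y S| := by
        intro S
        by_cases hS : S ∈ T
        · rw [T.piecewise_eq_of_mem _ _ hS]; exact le_max_left _ _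
        · rw [T.piecewise_eq_of_notMem _ _ hS]; exact le_max_right _ _
      have step : |g ((insert a T).piecewise x y) - g (T.piecewise x y)| ≤
          2 * A / h * |x a - y a| := by
        have hins : (insert a T).piecewise x y =
            Function.update (T.piecewise x y) a (x a) := Finset.piecewise_insert _ _ _ _
        have hTeq : T.piecewise x y = Function.update (T.piecewise x y) a (y a) := by
          rw [← T.piecewise_eq_of_notMem x y ha, Function.update_eq_self]
        have key := convex_diff_bound (A := A) (hconv (T.piecewise x y) a) hh (y a) (x a) ?_
        · rw [hins]; nth_rewrite 2 [hTeq]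
          exact key
        · intro u hu
          apply hA
          intro S
          by_cases hS : S = a
          · subst hS
            rw [Function.update_self]
            rwa [max_comm] at hu
          · rw [Function.update_of_ne hS]
            have := hz S
            have : |T.piecewise x y S| ≤ max |x S| |y S| + h := by linarith
            exact this
      calc |g ((insert a T).piecewise x y) - g y| ≤
            |g ((insert a T).piecewise x y) - g (T.piecewise x y)| +
              |g (T.piecewise x y) - g y| := abs_sub_le _ _ _
        _ ≤ 2 * A / h * |x a - y a| + 2 * A / h * ∑ S ∈ T, |x S - y S| := add_le_add step ih
        _ = 2 * A / h * ∑ S ∈ insert a T, |x S - y S| := by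
            rw [Finset.sum_insert ha]; ring
  have := main Finset.univ
  rwa [Finset.piecewise_univ] at this

set_option maxHeartbeats 2000000 in
/-- Lipschitz-type estimate for separately convex functions when the last
`m - r` exponents are `∞`, on the set `K = Λ^{k_1} × ⋯ × Λ^{k_r} × Q`, `Q = [-C,C]`-cube. -/
theorem stmt7 {n m : ℕ} (hm : 1 ≤ m) (k : Fin m → ℕ) (hk : ∀ i, k i + 1 ≤ n)
    (r : ℕ) (hr : r ≤ m) (p : Fin m → ℝ≥0∞)
    (hpfin : ∀ i : Fin m, i.1 < r → 1 ≤ p i ∧ p i ≠ ∞)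
    (hpinf : ∀ i : Fin m, r ≤ i.1 → p i = ∞)
    (f : ((i : Fin m) → Lam n (k i + 1)) → ℝ) (hsep : SepConvex f)
    (a : ℝ) (ha : 0 < a) (η : Fin m → ℝ → ℝ)
    (hη : ∀ i, (∀ t, 0 ≤ η i t) ∧ Continuous (η i) ∧ Monotone (η i))
    (hgrowth : ∀ ξ, |f ξ| ≤ a * (1 + ∑ i, if i.1 < r then nL (ξ i) ^ (p i).toReal
        else η i (nL (ξ i))))
    (C : ℝ) (hC : 0 < C) :
    ∃ β : Fin m → ℝ, (∀ i, 0 < β i) ∧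
      ∀ ξ ζ : (i : Fin m) → Lam n (k i + 1),
        (∀ i : Fin m, r ≤ i.1 → ∀ S, |ξ i S| ≤ C) →
        (∀ i : Fin m, r ≤ i.1 → ∀ S, |ζ i S| ≤ C) →
        |f ξ - f ζ| ≤
          (∑ i, if i.1 < r then
            β i * (1 + ∑ j, if j.1 < r then
                nL (ξ j) ^ ((p j).toReal * ((p i).toReal - 1) / (p i).toReal) +
                  nL (ζ j) ^ ((p j).toReal * ((p i).toReal - 1) / (p i).toReal)
              else 0) * nL (ξ i - ζ i)
          else 0) +
          ∑ i, if r ≤ i.1 then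
            β i * (1 + ∑ j, if j.1 < r then
                nL (ξ j) ^ (p j).toReal + nL (ζ j) ^ (p j).toReal else 0) * nL (ξ i - ζ i)
          else 0 := by
  classical
  obtain ⟨d, hd⟩ : ∃ d : Fin m → ℝ, d = fun j => (Fintype.card (IdxSet n (k j + 1)) : ℝ) :=
    ⟨_, rfl⟩
  have hd0 : ∀ j, 0 ≤ d j := fun j => by rw [hd]; exact Nat.cast_nonneg _
  have hd1 : ∀ j, 1 ≤ d j := by
    intro j
    have hne : Nonempty (IdxSet n (k j + 1)) := by
      obtain ⟨t, -, ht⟩ := Finset.exists_subset_card_eq (s := (Finset.univ : Finset (Fin n))) (n := k j + 1)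
        (by simpa using hk j)
      exact ⟨⟨t, ht⟩⟩
    have h1 : 0 < Fintype.card (IdxSet n (k j + 1)) := Fintype.card_pos_iff.mpr hne
    simp only [hd]; exact_mod_cast h1
  obtain ⟨E, hEdef⟩ : ∃ E : ℝ,
      E = ∑ j, if j.1 < r then 0 else η j (d j * (2 * (d j * C) + 1)) := ⟨_, rfl⟩
  have hE0 : 0 ≤ E := hEdef ▸ Finset.sum_nonneg fun j _ => by
    split_ifs
    · exact le_rfl
    · exact (hη j).1 _
  have hEi_le : ∀ j : Fin m, ¬ j.1 < r → η j (d j * (2 * (d j * C) + 1)) ≤ E := by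
    intro j hj
    have h1 := Finset.single_le_sum
      (f := fun j' : Fin m => if j'.1 < r then 0 else η j' (d j' * (2 * (d j' * C) + 1)))
      (fun j' _ => by split_ifs; exacts [le_rfl, (hη j').1 _]) (Finset.mem_univ j)
    rw [if_neg hj] at h1
    rw [hEdef]; exact h1
  obtain ⟨M2, hM2def⟩ : ∃ M2 : ℝ,
      M2 = 1 + ∑ j, if j.1 < r then (2:ℝ) ^ (p j).toReal else 0 := ⟨_, rfl⟩
  have hM2sum0 : 0 ≤ ∑ j : Fin m, if j.1 < r then (2:ℝ) ^ (p j).toReal else 0 :=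
    Finset.sum_nonneg fun j _ => by
      split_ifs
      · exact Real.rpow_nonneg (by norm_num) _
      · exact le_rfl
  have hM21 : 1 ≤ M2 := by rw [hM2def]; linarith
  have hM2le : ∀ j : Fin m, j.1 < r → (2:ℝ) ^ (p j).toReal ≤ M2 := by
    intro j hj
    have h1 := Finset.single_le_sum
      (f := fun j' : Fin m => if j'.1 < r then (2:ℝ) ^ (p j').toReal else 0)
      (fun j' _ => by
        split_ifs
        · exact Real.rpow_nonneg (by norm_num) _
        · exact le_rfl) (Finset.mem_univ j)
    rw [if_pos hj] at h1
    rw [hM2def]; linarith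
  have hP1 : ∀ j : Fin m, j.1 < r → 1 ≤ (p j).toReal := by
    intro j hj
    have h := hpfin j hj
    have h2 := ENNReal.toReal_mono h.2 h.1
    simpa using h2
  have hP0 : ∀ j : Fin m, 0 ≤ (p j).toReal := fun j => ENNReal.toReal_nonneg
  obtain ⟨β, hβ⟩ : ∃ β : Fin m → ℝ, β = fun i =>
      if i.1 < r then 1 + 2 * d i * a * (1 + (2 * d i) ^ (p i).toReal + E) * M2
      else 1 + 2 * d i * a * (1 + 2 * E) * M2 := ⟨_, rfl⟩
  refine ⟨β, ?_, ?_⟩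
  · intro i
    rw [hβ]
    dsimp only
    have h2d : (0:ℝ) ≤ (2 * d i) ^ (p i).toReal :=
      Real.rpow_nonneg (by have := hd0 i; linarith) _
    split_ifs
    · have h3 : 0 ≤ 2 * d i * a * (1 + (2 * d i) ^ (p i).toReal + E) * M2 :=
        mul_nonneg (mul_nonneg (mul_nonneg (by have := hd0 i; linarith) ha.le)
          (by linarith)) (by linarith)
      linarith
    · have h3 : 0 ≤ 2 * d i * a * (1 + 2 * E) * M2 :=
        mul_nonneg (mul_nonneg (mul_nonneg (by have := hd0 i; linarith) ha.le)
          (by linarith)) (by linarith)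
      linarith
  intro ξ ζ hξC hζC
  obtain ⟨N, hNdef⟩ : ∃ N : Fin m → ℝ, N = fun j => nL (ξ j) + nL (ζ j) := ⟨_, rfl⟩
  have hN0 : ∀ j, 0 ≤ N j := fun j => by
    rw [hNdef]; exact add_nonneg (nL_nonneg _) (nL_nonneg _)
  obtain ⟨H, hHdef⟩ : ∃ H : ℝ,
      H = 1 + ∑ j, if j.1 < r then N j ^ (p j).toReal else 0 := ⟨_, rfl⟩
  have hHsum0 : 0 ≤ ∑ j : Fin m, if j.1 < r then N j ^ (p j).toReal else 0 :=
    Finset.sum_nonneg fun j _ => by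
      split_ifs
      · exact Real.rpow_nonneg (hN0 j) _
      · exact le_rfl
  have hH1 : 1 ≤ H := by rw [hHdef]; linarith
  have hH0 : (0:ℝ) < H := lt_of_lt_of_le one_pos hH1
  have hNP_le_H : ∀ j : Fin m, j.1 < r → N j ^ (p j).toReal ≤ H := by
    intro j hj
    have h1 := Finset.single_le_sum
      (f := fun j' : Fin m => if j'.1 < r then N j' ^ (p j').toReal else 0)
      (fun j' _ => by
        split_ifs
        · exact Real.rpow_nonneg (hN0 j') _
        · exact le_rfl) (Finset.mem_univ j)
    rw [if_pos hj] at h1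
    rw [hHdef]; linarith
  -- the interpolation path
  obtain ⟨w, hw⟩ : ∃ w : ℕ → ((j : Fin m) → Lam n (k j + 1)),
      w = fun l j => if j.1 < l then ξ j else ζ j := ⟨_, rfl⟩
  have hwval : ∀ l (j : Fin m), w l j = ξ j ∨ w l j = ζ j := by
    intro l j
    rw [hw]
    dsimp only
    split_ifs
    · exact Or.inl rfl
    · exact Or.inr rfl
  have hwN : ∀ l (j : Fin m), nL (w l j) ≤ N j := by
    intro l j
    rcases hwval l j with h | h <;> rw [h, hNdef]
    · exact le_add_of_nonneg_right (nL_nonneg _)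
    · exact le_add_of_nonneg_left (nL_nonneg _)
  have hwC : ∀ l (j : Fin m), ¬ j.1 < r → nL (w l j) ≤ d j * C := by
    intro l j hj
    rcases hwval l j with h | h <;> rw [h] <;> simp only [hd]
    · exact nL_le_card_mul _ (hξC j (le_of_not_gt hj)) hC.le
    · exact nL_le_card_mul _ (hζC j (le_of_not_gt hj)) hC.le
  have hdC : ∀ j : Fin m, d j * C ≤ d j * (2 * (d j * C) + 1) := by
    intro j
    have h1 := hd1 j
    nlinarith [h1, hC, mul_nonneg (sub_nonneg.mpr h1) hC.le,
      mul_nonneg (mul_nonneg (hd0 j) (sub_nonneg.mpr h1)) hC.le]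
  have hηwl : ∀ l (j : Fin m), ¬ j.1 < r →
      η j (nL (w l j)) ≤ η j (d j * (2 * (d j * C) + 1)) :=
    fun l j hj => (hη j).2.2 ((hwC l j hj).trans (hdC j))
  obtain ⟨bnd, hbnd⟩ : ∃ bnd : Fin m → ℝ, bnd = fun j =>
      if j.1 < r then N j ^ (p j).toReal else η j (d j * (2 * (d j * C) + 1)) := ⟨_, rfl⟩
  have hbnd0 : ∀ j, 0 ≤ bnd j := fun j => by
    rw [hbnd]
    dsimp only
    split_ifs
    · exact Real.rpow_nonneg (hN0 j) _
    · exact (hη j).1 _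
  have hbnd_sum : ∑ j, bnd j = (H - 1) + E := by
    have h1 : ∀ j : Fin m, bnd j = (if j.1 < r then N j ^ (p j).toReal else 0) +
        (if j.1 < r then 0 else η j (d j * (2 * (d j * C) + 1))) := by
      intro j
      rw [hbnd]
      dsimp only
      split_ifs <;> ring
    rw [Finset.sum_congr rfl fun j _ => h1 j, Finset.sum_add_distrib, hHdef, hEdef]
    ring
  -- uniform growth bound along the path
  have hfb : ∀ (i : Fin m) (l : ℕ) (u : Lam n (k i + 1)) (Bi : ℝ),
      ((if i.1 < r then nL u ^ (p i).toReal else η i (nL u)) ≤ Bi) →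
      |f (Function.update (w l) i u)| ≤ a * (Bi + H + E) := by
    intro i l u Bi hBi
    refine (hgrowth _).trans ?_
    have hterm : ∀ j : Fin m, j ≠ i →
        (if j.1 < r then nL (Function.update (w l) i u j) ^ (p j).toReal
          else η j (nL (Function.update (w l) i u j))) ≤ bnd j := by
      intro j hji
      rw [Function.update_of_ne hji, hbnd]
      dsimp only
      split_ifs with hjr
      · exact Real.rpow_le_rpow (nL_nonneg _) (hwN l j) (hP0 j)
      · exact hηwl l j hjr
    have hsplit := Finset.add_sum_erase Finset.univ
      (fun j => if j.1 < r then nL (Function.update (w l) i u j) ^ (p j).toReal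
        else η j (nL (Function.update (w l) i u j))) (Finset.mem_univ i)
    have htermi : (if i.1 < r then nL (Function.update (w l) i u i) ^ (p i).toReal
        else η i (nL (Function.update (w l) i u i))) ≤ Bi := by
      rw [Function.update_self]; exact hBi
    have herase : (∑ j ∈ Finset.univ.erase i,
        if j.1 < r then nL (Function.update (w l) i u j) ^ (p j).toReal
          else η j (nL (Function.update (w l) i u j))) ≤
        ∑ j ∈ Finset.univ.erase i, bnd j :=
      Finset.sum_le_sum fun j hj => hterm j (Finset.ne_of_mem_erase hj)
    have herase2 : ∑ j ∈ Finset.univ.erase i, bnd j ≤ (H - 1) + E := by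
      have h2 := Finset.add_sum_erase Finset.univ bnd (Finset.mem_univ i)
      rw [hbnd_sum] at h2
      have := hbnd0 i
      linarith
    have hmain : (1:ℝ) + (∑ j, if j.1 < r then nL (Function.update (w l) i u j) ^ (p j).toReal
        else η j (nL (Function.update (w l) i u j))) ≤ Bi + H + E := by
      rw [← hsplit]
      linarith
    exact le_trans (mul_le_mul_of_nonneg_left hmain ha.le) le_rfl
  -- the power-of-H bound
  have Hpow_le : ∀ s : ℝ, 0 ≤ s → s ≤ 1 →
      H ^ s ≤ M2 * (1 + ∑ j, if j.1 < r then
        nL (ξ j) ^ ((p j).toReal * s) + nL (ζ j) ^ ((p j).toReal * s) else 0) := by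
    intro s hs0 hs1
    have hT : ∀ g : Fin m → ℝ, (∑ j, if j.1 < r then g j else 0) =
        ∑ j ∈ Finset.univ.filter (fun j : Fin m => j.1 < r), g j := by
      intro g
      rw [Finset.sum_filter]
    have step1 : H ^ s ≤ 1 + ∑ j ∈ Finset.univ.filter (fun j : Fin m => j.1 < r),
        (N j ^ (p j).toReal) ^ s := by
      rw [hHdef, hT fun j => N j ^ (p j).toReal]
      exact one_add_sum_rpow_le (fun j _ => Real.rpow_nonneg (hN0 j) _) hs0 hs1
    have step2 : ∀ j : Fin m, j.1 < r → (N j ^ (p j).toReal) ^ s ≤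
        M2 * (nL (ξ j) ^ ((p j).toReal * s) + nL (ζ j) ^ ((p j).toReal * s)) := by
      intro j hj
      have hq0 : 0 ≤ (p j).toReal * s := mul_nonneg (hP0 j) hs0
      have e1 : (N j ^ (p j).toReal) ^ s = N j ^ ((p j).toReal * s) :=
        (Real.rpow_mul (hN0 j) _ _).symm
      have e2 : N j ^ ((p j).toReal * s) ≤ (2:ℝ) ^ ((p j).toReal * s) *
          (nL (ξ j) ^ ((p j).toReal * s) + nL (ζ j) ^ ((p j).toReal * s)) := by
        rw [hNdef]
        exact rpow_add_le_two (nL_nonneg _) (nL_nonneg _) hq0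
      have e3 : (2:ℝ) ^ ((p j).toReal * s) ≤ M2 := by
        refine le_trans (Real.rpow_le_rpow_of_exponent_le one_le_two ?_) (hM2le j hj)
        nlinarith [hP0 j]
      have e4 : 0 ≤ nL (ξ j) ^ ((p j).toReal * s) + nL (ζ j) ^ ((p j).toReal * s) :=
        add_nonneg (Real.rpow_nonneg (nL_nonneg _) _) (Real.rpow_nonneg (nL_nonneg _) _)
      rw [e1]
      exact e2.trans (mul_le_mul_of_nonneg_right e3 e4)
    have step3 : (∑ j ∈ Finset.univ.filter (fun j : Fin m => j.1 < r),
        (N j ^ (p j).toReal) ^ s) ≤ M2 * ∑ j ∈ Finset.univ.filter (fun j : Fin m => j.1 < r),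
        (nL (ξ j) ^ ((p j).toReal * s) + nL (ζ j) ^ ((p j).toReal * s)) := by
      rw [Finset.mul_sum]
      refine Finset.sum_le_sum fun j hj => step2 j (Finset.mem_filter.mp hj).2
    have hsumnn : 0 ≤ ∑ j ∈ Finset.univ.filter (fun j : Fin m => j.1 < r),
        (nL (ξ j) ^ ((p j).toReal * s) + nL (ζ j) ^ ((p j).toReal * s)) :=
      Finset.sum_nonneg fun j _ =>
        add_nonneg (Real.rpow_nonneg (nL_nonneg _) _) (Real.rpow_nonneg (nL_nonneg _) _)
    rw [hT fun j => nL (ξ j) ^ ((p j).toReal * s) + nL (ζ j) ^ ((p j).toReal * s)]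
    nlinarith [step1, step3, hM21, hsumnn]
  -- per-component key estimate
  obtain ⟨G, hG⟩ : ∃ G : Fin m → ℝ, G = fun i =>
      if i.1 < r then
        β i * (1 + ∑ j, if j.1 < r then
            nL (ξ j) ^ ((p j).toReal * ((p i).toReal - 1) / (p i).toReal) +
              nL (ζ j) ^ ((p j).toReal * ((p i).toReal - 1) / (p i).toReal)
          else 0) * nL (ξ i - ζ i)
      else
        β i * (1 + ∑ j, if j.1 < r then
            nL (ξ j) ^ (p j).toReal + nL (ζ j) ^ (p j).toReal else 0) * nL (ξ i - ζ i) :=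
    ⟨_, rfl⟩
  have key : ∀ i : Fin m, |f (w (i.1 + 1)) - f (w i.1)| ≤ G i := by
    intro i
    rw [hG]
    dsimp only
    have hwup : w (i.1 + 1) = Function.update (w i.1) i (ξ i) := by
      funext j
      by_cases hji : j = i
      · subst hji
        rw [Function.update_self, hw]
        dsimp only
        rw [if_pos (by omega)]
      · rw [Function.update_of_ne hji, hw]
        dsimp only
        have hne : j.1 ≠ i.1 := fun h => hji (Fin.ext h)
        by_cases hj : j.1 < i.1
        · rw [if_pos hj, if_pos (by omega)]
        · rw [if_neg hj, if_neg (by omega)]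
    have hwdown : Function.update (w i.1) i (ζ i) = w i.1 := by
      have h1 := Function.update_eq_self i (w i.1)
      have h2 : w i.1 i = ζ i := by rw [hw]; dsimp only; rw [if_neg (by omega)]
      rwa [h2] at h1
    have hgconv : ∀ (z : Lam n (k i + 1)) S,
        ConvexOn ℝ Set.univ fun t => f (Function.update (w i.1) i (Function.update z S t)) := by
      intro z S
      have h1 := hsep (Function.update (w i.1) i z) i S
      simpa only [Function.update_self, Function.update_idem] using h1
    by_cases hir : i.1 < r
    · rw [if_pos hir]
      have hPi1 : 1 ≤ (p i).toReal := hP1 i hir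
      have hPi0 : (0:ℝ) < (p i).toReal := by linarith
      obtain ⟨hc, hhc⟩ : ∃ hc : ℝ, hc = H ^ ((p i).toReal)⁻¹ := ⟨_, rfl⟩
      have hhc0 : (0:ℝ) < hc := by rw [hhc]; exact Real.rpow_pos_of_pos hH0 _
      have hcpow : hc ^ (p i).toReal = H := by
        rw [hhc, ← Real.rpow_mul hH0.le, inv_mul_cancel₀ (ne_of_gt hPi0), Real.rpow_one]
      have hNi_le : N i ≤ hc := by
        have h1 : N i ^ (p i).toReal ≤ H := hNP_le_H i hir
        have h2 : (N i ^ (p i).toReal) ^ ((p i).toReal)⁻¹ ≤ H ^ ((p i).toReal)⁻¹ :=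
          Real.rpow_le_rpow (Real.rpow_nonneg (hN0 i) _) h1 (by positivity)
        rwa [← Real.rpow_mul (hN0 i), mul_inv_cancel₀ (ne_of_gt hPi0), Real.rpow_one,
          ← hhc] at h2
      have h2d0 : (0:ℝ) ≤ (2 * d i) ^ (p i).toReal :=
        Real.rpow_nonneg (by have := hd0 i; linarith) _
      obtain ⟨A, hA⟩ : ∃ A : ℝ, A = a * ((2 * d i) ^ (p i).toReal * H + H + E) := ⟨_, rfl⟩
      have hA0 : 0 ≤ A := by
        rw [hA]
        have h3 : 0 ≤ (2 * d i) ^ (p i).toReal * H := mul_nonneg h2d0 hH0.le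
        nlinarith [ha.le, hE0, hH1]
      have hbound : ∀ u : Lam n (k i + 1),
          (∀ S, |u S| ≤ max |ξ i S| |ζ i S| + hc) →
          |f (Function.update (w i.1) i u)| ≤ A := by
        intro u hu
        rw [hA]
        have h1 : nL u ≤ d i * (N i + hc) := by
          calc nL u ≤ ∑ S, |u S| := nL_le_sum_abs u
            _ ≤ ∑ _S : IdxSet n (k i + 1), (nL (ξ i) + nL (ζ i) + hc) := by
                refine Finset.sum_le_sum fun S _ => (hu S).trans ?_
                have h2 := abs_le_nL (ξ i) S
                have h3 := abs_le_nL (ζ i) S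
                have h4 := max_le_add_of_nonneg (abs_nonneg (ξ i S)) (abs_nonneg (ζ i S))
                linarith
            _ = d i * (N i + hc) := by
                rw [Finset.sum_const, Finset.card_univ, nsmul_eq_mul, hd, hNdef]
        have h2 : nL u ≤ 2 * d i * hc := by
          have h3 : d i * (N i + hc) ≤ d i * (hc + hc) :=
            mul_le_mul_of_nonneg_left (by linarith [hNi_le]) (hd0 i)
          calc nL u ≤ d i * (N i + hc) := h1
            _ ≤ d i * (hc + hc) := h3
            _ = 2 * d i * hc := by ring
        refine hfb i i.1 u _ ?_
        rw [if_pos hir]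
        calc nL u ^ (p i).toReal ≤ (2 * d i * hc) ^ (p i).toReal :=
              Real.rpow_le_rpow (nL_nonneg _) h2 (hP0 i)
          _ = (2 * d i) ^ (p i).toReal * hc ^ (p i).toReal :=
              Real.mul_rpow (by have := hd0 i; linarith) hhc0.le
          _ = (2 * d i) ^ (p i).toReal * H := by rw [hcpow]
      have hdiff := sep_convex_diff_bound (g := fun z => f (Function.update (w i.1) i z))
        hgconv (ξ i) (ζ i) hhc0 hbound
      obtain ⟨s, hsdef⟩ : ∃ s : ℝ, s = ((p i).toReal - 1) / (p i).toReal := ⟨_, rfl⟩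
      have hs0 : 0 ≤ s := by rw [hsdef]; exact div_nonneg (by linarith) hPi0.le
      have hs1 : s ≤ 1 := by rw [hsdef]; rw [div_le_one hPi0]; linarith
      have hcs : H ^ s * hc = H := by
        rw [hhc, ← Real.rpow_add hH0]
        have he : s + ((p i).toReal)⁻¹ = 1 := by
          rw [hsdef]
          field_simp
          ring
        rw [he, Real.rpow_one]
      obtain ⟨Fac, hFac⟩ : ∃ Fac : ℝ, Fac = 1 + ∑ j, if j.1 < r then
          nL (ξ j) ^ ((p j).toReal * ((p i).toReal - 1) / (p i).toReal) +
            nL (ζ j) ^ ((p j).toReal * ((p i).toReal - 1) / (p i).toReal)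
        else 0 := ⟨_, rfl⟩
      have hFac1 : 1 ≤ Fac := by
        rw [hFac]
        have h5 : 0 ≤ ∑ j : Fin m, if j.1 < r then
            nL (ξ j) ^ ((p j).toReal * ((p i).toReal - 1) / (p i).toReal) +
              nL (ζ j) ^ ((p j).toReal * ((p i).toReal - 1) / (p i).toReal) else 0 :=
          Finset.sum_nonneg fun j _ => by
            split_ifs
            · exact add_nonneg (Real.rpow_nonneg (nL_nonneg _) _)
                (Real.rpow_nonneg (nL_nonneg _) _)
            · exact le_rfl
        linarith
      have hFac0 : 0 ≤ Fac := by linarith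
      have c2 : ((2 * d i) ^ (p i).toReal * H + H + E) / hc ≤
          (1 + (2 * d i) ^ (p i).toReal + E) * H ^ s := by
        rw [div_le_iff₀ hhc0, mul_assoc, hcs]
        nlinarith [hE0, hH1, mul_le_mul_of_nonneg_left hH1 hE0]
      have c3 : H ^ s ≤ M2 * Fac := by
        have h7 := Hpow_le s hs0 hs1
        have he : ∀ j : Fin m, (p j).toReal * s =
            (p j).toReal * ((p i).toReal - 1) / (p i).toReal := by
          intro j
          rw [hsdef, mul_div_assoc]
        calc H ^ s ≤ M2 * (1 + ∑ j, if j.1 < r then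
              nL (ξ j) ^ ((p j).toReal * s) + nL (ζ j) ^ ((p j).toReal * s) else 0) := h7
          _ = M2 * Fac := by
              rw [hFac]
              congr 2
              refine Finset.sum_congr rfl fun j _ => ?_
              rw [he j]
      have hda0 : (0:ℝ) ≤ 2 * d i * a := by
        have := hd0 i
        nlinarith [ha.le]
      calc |f (w (i.1 + 1)) - f (w i.1)|
          = |f (Function.update (w i.1) i (ξ i)) - f (Function.update (w i.1) i (ζ i))| := by
            rw [hwup, hwdown]
        _ ≤ 2 * A / hc * ∑ S, |ξ i S - ζ i S| := hdiff
        _ ≤ 2 * A / hc * (d i * nL (ξ i - ζ i)) := by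
            refine mul_le_mul_of_nonneg_left ?_ (by positivity)
            have h6 := sum_abs_le_card_nL (ξ i - ζ i)
            rw [hd]
            exact h6
        _ = 2 * d i * a * (((2 * d i) ^ (p i).toReal * H + H + E) / hc) * nL (ξ i - ζ i) := by
            rw [hA]
            field_simp
        _ ≤ 2 * d i * a * ((1 + (2 * d i) ^ (p i).toReal + E) * (M2 * Fac)) *
              nL (ξ i - ζ i) := by
            refine mul_le_mul_of_nonneg_right (mul_le_mul_of_nonneg_left ?_ hda0)
              (nL_nonneg _)
            calc ((2 * d i) ^ (p i).toReal * H + H + E) / hc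
                ≤ (1 + (2 * d i) ^ (p i).toReal + E) * H ^ s := c2
              _ ≤ (1 + (2 * d i) ^ (p i).toReal + E) * (M2 * Fac) :=
                  mul_le_mul_of_nonneg_left c3 (by nlinarith [hE0, h2d0])
        _ ≤ β i * (1 + ∑ j, if j.1 < r then
              nL (ξ j) ^ ((p j).toReal * ((p i).toReal - 1) / (p i).toReal) +
                nL (ζ j) ^ ((p j).toReal * ((p i).toReal - 1) / (p i).toReal)
            else 0) * nL (ξ i - ζ i) := by
            rw [← hFac]
            refine mul_le_mul_of_nonneg_right ?_ (nL_nonneg _)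
            have he2 : 2 * d i * a * ((1 + (2 * d i) ^ (p i).toReal + E) * (M2 * Fac)) =
                (2 * d i * a * (1 + (2 * d i) ^ (p i).toReal + E) * M2) * Fac := by ring
            rw [he2, hβ]
            dsimp only
            rw [if_pos hir]
            refine mul_le_mul_of_nonneg_right ?_ hFac0
            linarith
    · rw [if_neg hir]
      obtain ⟨A, hA⟩ : ∃ A : ℝ,
          A = a * (η i (d i * (2 * (d i * C) + 1)) + H + E) := ⟨_, rfl⟩
      have hA0 : 0 ≤ A := by
        rw [hA]
        have h3 := (hη i).1 (d i * (2 * (d i * C) + 1))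
        nlinarith [ha.le, hE0, hH1]
      have hbound : ∀ u : Lam n (k i + 1),
          (∀ S, |u S| ≤ max |ξ i S| |ζ i S| + 1) →
          |f (Function.update (w i.1) i u)| ≤ A := by
        intro u hu
        rw [hA]
        refine hfb i i.1 u _ ?_
        rw [if_neg hir]
        refine (hη i).2.2 ?_
        have h1 : nL u ≤ d i * (C + 1) := by
          simp only [hd]
          refine nL_le_card_mul u (fun S => ?_) (by linarith [hC.le])
          have h2 := hξC i (le_of_not_gt hir) S
          have h3 := hζC i (le_of_not_gt hir) S
          have h4 := hu S
          have h5 : max |ξ i S| |ζ i S| ≤ C := max_le h2 h3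
          linarith
        refine h1.trans ?_
        have h5 := hd1 i
        nlinarith [hC.le, hd0 i, mul_nonneg (mul_nonneg (hd0 i) (sub_nonneg.mpr h5)) hC.le,
          mul_nonneg (hd0 i) hC.le]
      have hdiff := sep_convex_diff_bound (g := fun z => f (Function.update (w i.1) i z))
        hgconv (ξ i) (ζ i) one_pos hbound
      obtain ⟨Fac, hFac⟩ : ∃ Fac : ℝ, Fac = 1 + ∑ j, if j.1 < r then
          nL (ξ j) ^ (p j).toReal + nL (ζ j) ^ (p j).toReal else 0 := ⟨_, rfl⟩
      have hFac1 : 1 ≤ Fac := by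
        rw [hFac]
        have h5 : 0 ≤ ∑ j : Fin m, if j.1 < r then
            nL (ξ j) ^ (p j).toReal + nL (ζ j) ^ (p j).toReal else 0 :=
          Finset.sum_nonneg fun j _ => by
            split_ifs
            · exact add_nonneg (Real.rpow_nonneg (nL_nonneg _) _)
                (Real.rpow_nonneg (nL_nonneg _) _)
            · exact le_rfl
        linarith
      have hFac0 : 0 ≤ Fac := by linarith
      have c3 : H ≤ M2 * Fac := by
        have h7 := Hpow_le 1 zero_le_one le_rfl
        rw [Real.rpow_one] at h7
        calc H ≤ M2 * (1 + ∑ j, if j.1 < r then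
              nL (ξ j) ^ ((p j).toReal * 1) + nL (ζ j) ^ ((p j).toReal * 1) else 0) := h7
          _ = M2 * Fac := by
              rw [hFac]
              congr 2
              refine Finset.sum_congr rfl fun j _ => ?_
              rw [mul_one]
      have hEiH : η i (d i * (2 * (d i * C) + 1)) + H + E ≤ (1 + 2 * E) * H := by
        have h8 := hEi_le i hir
        nlinarith [hE0, hH1, mul_le_mul_of_nonneg_left hH1 hE0]
      have hda0 : (0:ℝ) ≤ 2 * d i * a := by
        have := hd0 i
        nlinarith [ha.le]
      calc |f (w (i.1 + 1)) - f (w i.1)|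
          = |f (Function.update (w i.1) i (ξ i)) - f (Function.update (w i.1) i (ζ i))| := by
            have hwup2 := hwup
            have hwdown2 := hwdown
            rw [hwup2, hwdown2]
        _ ≤ 2 * A / 1 * ∑ S, |ξ i S - ζ i S| := hdiff
        _ ≤ 2 * A / 1 * (d i * nL (ξ i - ζ i)) := by
            refine mul_le_mul_of_nonneg_left ?_ (by positivity)
            have h6 := sum_abs_le_card_nL (ξ i - ζ i)
            rw [hd]
            exact h6
        _ = 2 * d i * a * (η i (d i * (2 * (d i * C) + 1)) + H + E) * nL (ξ i - ζ i) := by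
            rw [hA]
            ring
        _ ≤ 2 * d i * a * ((1 + 2 * E) * (M2 * Fac)) * nL (ξ i - ζ i) := by
            refine mul_le_mul_of_nonneg_right (mul_le_mul_of_nonneg_left ?_ hda0)
              (nL_nonneg _)
            refine hEiH.trans (mul_le_mul_of_nonneg_left c3 ?_)
            linarith
        _ ≤ β i * (1 + ∑ j, if j.1 < r then
              nL (ξ j) ^ (p j).toReal + nL (ζ j) ^ (p j).toReal else 0) * nL (ξ i - ζ i) := by
            rw [← hFac]
            refine mul_le_mul_of_nonneg_right ?_ (nL_nonneg _)
            have he2 : 2 * d i * a * ((1 + 2 * E) * (M2 * Fac)) =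
                (2 * d i * a * (1 + 2 * E) * M2) * Fac := by ring
            rw [he2, hβ]
            dsimp only
            rw [if_neg hir]
            refine mul_le_mul_of_nonneg_right ?_ hFac0
            linarith
  -- telescoping
  have hw0 : w 0 = ζ := by
    funext j
    rw [hw]
    dsimp only
    rw [if_neg (by omega)]
  have hwm : w m = ξ := by
    funext j
    rw [hw]
    dsimp only
    rw [if_pos j.2]
  have tele : f ξ - f ζ = ∑ l ∈ Finset.range m, (f (w (l + 1)) - f (w l)) := by
    rw [Finset.sum_range_sub (fun l => f (w l)), hw0, hwm]
  calc |f ξ - f ζ| = |∑ l ∈ Finset.range m, (f (w (l + 1)) - f (w l))| := by rw [tele]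
    _ ≤ ∑ l ∈ Finset.range m, |f (w (l + 1)) - f (w l)| :=
        Finset.abs_sum_le_sum_abs _ _
    _ ≤ ∑ l ∈ Finset.range m, (if hl : l < m then G ⟨l, hl⟩ else 0) := by
        refine Finset.sum_le_sum fun l hl => ?_
        rw [dif_pos (Finset.mem_range.mp hl)]
        exact key ⟨l, Finset.mem_range.mp hl⟩
    _ = ∑ i : Fin m, G i := by
        rw [← Fin.sum_univ_eq_sum_range (fun l => if hl : l < m then G ⟨l, hl⟩ else 0) m]
        refine Finset.sum_congr rfl fun i _ => ?_
        rw [dif_pos i.2]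
    _ = _ := by
        rw [← Finset.sum_add_distrib]
        refine Finset.sum_congr rfl fun i _ => ?_
        rw [hG]
        dsimp only
        by_cases hir : i.1 < r
        · rw [if_pos hir, if_pos hir, if_neg (by omega)]
          ring
        · rw [if_neg hir, if_neg hir, if_pos (by omega)]
          ring
end
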